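/- Let a = a* ≥ 0 and b = b* in B(H) with |⟨bξ,ξ⟩| ≤ M⟨aξ,ξ⟩ for all ξ ∈ H. Then there exists a selfadjoint c ∈ B(H) with ‖c‖ ≤ M and b = a^{1/2} c a^{1/2}. -/

import Mathlib

open ContinuousLinearMap

private lemma stmt7_exist {H : Type*} [NormedAddCommGroup H] [InnerProductSpace ℂ H]
    [CompleteSpace H] (s : H →L[ℂ] H) (φ : H →ₗ[ℂ] ℂ) (C : ℝ) (hC : 0 ≤ C)
    (hφ : ∀ η, ‖φ η‖ ≤ C * ‖s η‖) :
    ∃ v : H, v ∈ (LinearMap.range (s : H →ₗ[ℂ] H)).topologicalClosure ∧ ‖v‖ ≤ C ∧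
      ∀ η, (inner ℂ v (s η) : ℂ) = φ η := by
  set K : Submodule ℂ H := LinearMap.range (s : H →ₗ[ℂ] H) with hKdef
  have hker : LinearMap.ker (s : H →ₗ[ℂ] H) ≤ LinearMap.ker φ := by
    intro η hη
    rw [LinearMap.mem_ker] at hη ⊢
    have h1 := hφ η
    have h2 : ‖s η‖ = 0 := by
      rw [norm_eq_zero]; simpa using hη
    rw [h2, mul_zero] at h1
    exact norm_le_zero_iff.mp h1
  let f₀ : (H ⧸ LinearMap.ker (s : H →ₗ[ℂ] H)) →ₗ[ℂ] ℂ :=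
    Submodule.liftQ _ φ hker
  let e := LinearMap.quotKerEquivRange (s : H →ₗ[ℂ] H)
  let f₁ : K →ₗ[ℂ] ℂ := f₀ ∘ₗ (e.symm : K →ₗ[ℂ] (H ⧸ LinearMap.ker (s : H →ₗ[ℂ] H)))
  have hf₁ : ∀ (η : H) (hm : s η ∈ K), f₁ ⟨s η, hm⟩ = φ η := by
    intro η hm
    have he : e (Submodule.Quotient.mk η) = ⟨s η, hm⟩ := by
      apply Subtype.ext
      exact LinearMap.quotKerEquivRange_apply_mk (s : H →ₗ[ℂ] H) η
    have : e.symm ⟨s η, hm⟩ = Submodule.Quotient.mk η := by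
      rw [← he, LinearEquiv.symm_apply_apply]
    simp only [f₁, LinearMap.comp_apply, LinearEquiv.coe_coe, this]
    simp [f₀]
  have hbound : ∀ x : K, ‖f₁ x‖ ≤ C * ‖x‖ := by
    rintro ⟨x, hx⟩
    obtain ⟨η, rfl⟩ := hx
    have h1 : f₁ ⟨(s : H →ₗ[ℂ] H) η, ⟨η, rfl⟩⟩ = φ η := hf₁ η ⟨η, rfl⟩
    rw [h1]
    exact hφ η
  let f : K →L[ℂ] ℂ := f₁.mkContinuous C hbound
  obtain ⟨g, hg, hgnorm⟩ := exists_extension_norm_eq K f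
  have hgnorm' : ‖g‖ ≤ C := by
    rw [hgnorm]; exact f₁.mkContinuous_norm_le hC hbound
  set w : H := (InnerProductSpace.toDual ℂ H).symm g with hw
  have hwg : ∀ y : H, (inner ℂ w y : ℂ) = g y := fun y =>
    InnerProductSpace.toDual_symm_apply
  have hwnorm : ‖w‖ = ‖g‖ := LinearIsometryEquiv.norm_map _ g
  haveI : CompleteSpace K.topologicalClosure :=
    K.isClosed_topologicalClosure.completeSpace_coe
  set v : H := (Submodule.orthogonalProjection K.topologicalClosure w : H) with hv
  refine ⟨v, Submodule.coe_mem _, ?_, ?_⟩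
  · have h1 := (Submodule.orthogonalProjection K.topologicalClosure).le_opNorm w
    have h2 := Submodule.orthogonalProjection_norm_le K.topologicalClosure
    have h3 : ‖(Submodule.orthogonalProjection K.topologicalClosure) w‖ = ‖v‖ := rfl
    have h4 : ‖w‖ ≤ C := hwnorm ▸ hgnorm'
    nlinarith [norm_nonneg w]
  · intro η
    have hmem : s η ∈ K.topologicalClosure :=
      Submodule.le_topologicalClosure K ⟨η, rfl⟩
    have horth0 : (inner ℂ (s η) (w - v) : ℂ) = 0 :=
      (Submodule.sub_starProjection_mem_orthogonal (K := K.topologicalClosure) w) _ hmem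
    have horth : (inner ℂ (w - v) (s η) : ℂ) = 0 := by
      rw [← inner_conj_symm, horth0, map_zero]
    rw [inner_sub_left] at horth
    have hvw : (inner ℂ v (s η) : ℂ) = inner ℂ w (s η) := by linear_combination -horth
    rw [hvw, hwg, hg ⟨s η, ⟨η, rfl⟩⟩]
    exact hf₁ η ⟨η, rfl⟩

open scoped ComplexConjugate


private lemma stmt7_key {H : Type*} [NormedAddCommGroup H] [InnerProductSpace ℂ H]
    [CompleteSpace H] (b s : H →L[ℂ] H) (hb : IsSelfAdjoint b) (M : ℝ) (hM : 0 ≤ M)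
    (h2 : ∀ ξ, ‖(inner ℂ (b ξ) ξ : ℂ)‖ ≤ M * ‖s ξ‖ ^ 2) :
    ∀ ξ η, ‖(inner ℂ (b ξ) η : ℂ)‖ ≤ M * (‖s ξ‖ * ‖s η‖) := by
  have hsym := hb.isSymmetric
  have h3 : ∀ ξ η : H, |(inner ℂ (b ξ) η : ℂ).re| ≤ M / 2 * (‖s ξ‖ ^ 2 + ‖s η‖ ^ 2) := by
    intro ξ η
    have e2 : (inner ℂ (b η) ξ : ℂ) = conj (inner ℂ (b ξ) η : ℂ) := by
      rw [← inner_conj_symm]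
      congr 1
      exact (hsym ξ η).symm
    have e1 : (inner ℂ (b (ξ + η)) (ξ + η) : ℂ) - inner ℂ (b (ξ - η)) (ξ - η)
        = 2 * ((inner ℂ (b ξ) η : ℂ) + conj (inner ℂ (b ξ) η : ℂ)) := by
      simp only [map_add, map_sub, inner_add_left, inner_add_right, inner_sub_left,
        inner_sub_right, e2]
      ring
    have e3 : 4 * (inner ℂ (b ξ) η : ℂ).re
        = (inner ℂ (b (ξ + η)) (ξ + η) : ℂ).re - (inner ℂ (b (ξ - η)) (ξ - η) : ℂ).re := by
      have h := congrArg Complex.re e1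
      rw [Complex.add_conj] at h
      simp only [Complex.sub_re, Complex.mul_re, Complex.ofReal_re, Complex.ofReal_im,
        Complex.re_ofNat, Complex.im_ofNat] at h
      linarith
    have p1 := h2 (ξ + η)
    have p2 := h2 (ξ - η)
    have q1 : |(inner ℂ (b (ξ + η)) (ξ + η) : ℂ).re| ≤ M * ‖s ξ + s η‖ ^ 2 := by
      refine le_trans (Complex.abs_re_le_norm _) ?_
      simpa [map_add] using p1
    have q2 : |(inner ℂ (b (ξ - η)) (ξ - η) : ℂ).re| ≤ M * ‖s ξ - s η‖ ^ 2 := by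
      refine le_trans (Complex.abs_re_le_norm _) ?_
      simpa [map_sub] using p2
    have par := parallelogram_law_with_norm ℂ (s ξ) (s η)
    rw [abs_le] at q1 q2 ⊢
    constructor <;> nlinarith [q1.1, q1.2, q2.1, q2.2]
  have h4 : ∀ ξ η : H, ‖(inner ℂ (b ξ) η : ℂ)‖ ≤ M / 2 * (‖s ξ‖ ^ 2 + ‖s η‖ ^ 2) := by
    intro ξ η
    set z : ℂ := inner ℂ (b ξ) η with hz
    rcases eq_or_ne z 0 with h0 | h0
    · rw [h0]; simp; positivity
    · set u : ℂ := (‖z‖ : ℂ) / conj z with hu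
      have hcu : conj u = (‖z‖ : ℂ) / z := by
        rw [hu, map_div₀]; simp
      have hnu : ‖u‖ = 1 := by
        rw [hu, norm_div, RCLike.norm_conj, Complex.norm_real, Real.norm_eq_abs,
          abs_of_nonneg (norm_nonneg z)]
        exact div_self (norm_ne_zero_iff.mpr h0)
      have hinner : (inner ℂ (b (u • ξ)) η : ℂ) = (‖z‖ : ℂ) := by
        rw [map_smul, inner_smul_left, hcu, ← hz, div_mul_cancel₀ _ h0]
      have hre : (inner ℂ (b (u • ξ)) η : ℂ).re = ‖z‖ := by rw [hinner]; simp
      have hns : ‖s (u • ξ)‖ = ‖s ξ‖ := by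
        rw [map_smul, norm_smul, hnu, one_mul]
      have := h3 (u • ξ) η
      rw [hre, hns] at this
      exact le_trans (le_abs_self _) this
  intro ξ η
  set z : ℂ := inner ℂ (b ξ) η with hz
  have hsc : ∀ t : ℝ, 0 < t → t * ‖z‖ ≤ M / 2 * (t ^ 2 * ‖s ξ‖ ^ 2 + ‖s η‖ ^ 2) := by
    intro t ht
    have := h4 ((t : ℂ) • ξ) η
    rw [map_smul, inner_smul_left, map_smul, norm_smul] at this
    simp only [Complex.conj_ofReal, norm_mul, Complex.norm_real] at this
    rw [Real.norm_eq_abs, abs_of_pos ht] at this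
    calc t * ‖z‖ ≤ M / 2 * ((t * ‖s ξ‖) ^ 2 + ‖s η‖ ^ 2) := this
    _ = M / 2 * (t ^ 2 * ‖s ξ‖ ^ 2 + ‖s η‖ ^ 2) := by ring
  have hsc' : ∀ t : ℝ, 0 < t → t * ‖z‖ ≤ M / 2 * (‖s ξ‖ ^ 2 + t ^ 2 * ‖s η‖ ^ 2) := by
    intro t ht
    have := h4 ξ ((t : ℂ) • η)
    rw [inner_smul_right, map_smul, norm_smul] at this
    simp only [norm_mul, Complex.norm_real] at this
    rw [Real.norm_eq_abs, abs_of_pos ht] at this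
    calc t * ‖z‖ ≤ M / 2 * (‖s ξ‖ ^ 2 + (t * ‖s η‖) ^ 2) := this
    _ = M / 2 * (‖s ξ‖ ^ 2 + t ^ 2 * ‖s η‖ ^ 2) := by ring
  rcases eq_or_lt_of_le (norm_nonneg (s ξ)) with hξ | hξ
  · -- ‖s ξ‖ = 0
    by_contra hlt
    push_neg at hlt
    have h0' : M * (‖s ξ‖ * ‖s η‖) = 0 := by rw [← hξ]; ring
    have hzpos : 0 < ‖z‖ := by linarith
    have ht : (0 : ℝ) < (M / 2 * ‖s η‖ ^ 2 + 1) / ‖z‖ := by positivity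
    have := hsc _ ht
    rw [div_mul_cancel₀ _ (ne_of_gt hzpos), ← hξ] at this
    ring_nf at this
    linarith
  · rcases eq_or_lt_of_le (norm_nonneg (s η)) with hη | hη
    · by_contra hlt
      push_neg at hlt
      have h0' : M * (‖s ξ‖ * ‖s η‖) = 0 := by rw [← hη]; ring
      have hzpos : 0 < ‖z‖ := by linarith
      have ht : (0 : ℝ) < (M / 2 * ‖s ξ‖ ^ 2 + 1) / ‖z‖ := by positivity
      have := hsc' _ ht
      rw [div_mul_cancel₀ _ (ne_of_gt hzpos), ← hη] at this
      ring_nf at this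
      linarith
    · have ht : (0 : ℝ) < ‖s η‖ / ‖s ξ‖ := by positivity
      have h5 := hsc _ ht
      have h6 : (‖s η‖ / ‖s ξ‖) ^ 2 * ‖s ξ‖ ^ 2 = ‖s η‖ ^ 2 := by
        field_simp
      rw [h6] at h5
      have h7 : (‖s η‖ / ‖s ξ‖) * ‖z‖ ≤ M * ‖s η‖ ^ 2 := by linarith
      rw [div_mul_eq_mul_div, div_le_iff₀ (by positivity)] at h7
      nlinarith [norm_nonneg z]

/-- If `a ≥ 0`, `b = b*` in `B(H)` and `|⟨bξ,ξ⟩| ≤ M⟨aξ,ξ⟩` for all `ξ`, then there is a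
selfadjoint `c` with `‖c‖ ≤ M` and `b = a^{1/2} c a^{1/2}` (where `a^{1/2}` is the unique
positive square root of `a`). -/
theorem stmt7 {H : Type*} [NormedAddCommGroup H] [InnerProductSpace ℂ H] [CompleteSpace H]
    (a b : H →L[ℂ] H) (ha : a.IsPositive) (hb : IsSelfAdjoint b) (M : ℝ) (hM : 0 ≤ M)
    (hbd : ∀ ξ : H, |(inner ℂ (b ξ) ξ : ℂ).re| ≤ M * (inner ℂ (a ξ) ξ : ℂ).re)
    (s : H →L[ℂ] H) (hs : s.IsPositive) (hsa : s * s = a) :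
    ∃ c : H →L[ℂ] H, IsSelfAdjoint c ∧ ‖c‖ ≤ M ∧ b = s * c * s := by
  have hssym := hs.1
  have hbsym := hb.isSymmetric
  -- step 1: diagonal bound in terms of ‖s ξ‖
  have h2 : ∀ ξ : H, ‖(inner ℂ (b ξ) ξ : ℂ)‖ ≤ M * ‖s ξ‖ ^ 2 := by
    intro ξ
    have ha' : (inner ℂ (a ξ) ξ : ℂ).re = ‖s ξ‖ ^ 2 := by
      have hax : a ξ = s (s ξ) := by rw [← hsa]; rfl
      rw [hax]
      have e : (inner ℂ (s (s ξ)) ξ : ℂ) = inner ℂ (s ξ) (s ξ) := hssym (s ξ) ξ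
      rw [e]
      exact inner_self_eq_norm_sq (𝕜 := ℂ) (s ξ)
    have hconj : (starRingEnd ℂ) (inner ℂ (b ξ) ξ : ℂ) = inner ℂ (b ξ) ξ := by
      rw [inner_conj_symm]; exact (hbsym ξ ξ).symm
    have hre : (((inner ℂ (b ξ) ξ : ℂ).re : ℝ) : ℂ) = inner ℂ (b ξ) ξ :=
      Complex.conj_eq_iff_re.mp hconj
    have hnorm : ‖(inner ℂ (b ξ) ξ : ℂ)‖ = |(inner ℂ (b ξ) ξ : ℂ).re| := by
      conv_lhs => rw [← hre]
      rw [Complex.norm_real, Real.norm_eq_abs]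
    rw [hnorm, ← ha']
    exact hbd ξ
  have key := stmt7_key b s hb M hM h2
  set K : Submodule ℂ H := LinearMap.range (s : H →ₗ[ℂ] H) with hK
  haveI : CompleteSpace K.topologicalClosure :=
    K.isClosed_topologicalClosure.completeSpace_coe
  -- step 2 : construct c₁ with ⟪c₁ ξ, s η⟫ = ⟪b ξ, η⟫
  choose c₁ hmem₁ hnorm₁ hip₁ using fun ξ : H =>
    stmt7_exist s ((innerSL ℂ (b ξ)) : H →ₗ[ℂ] ℂ) (M * ‖s ξ‖) (by positivity)
      (fun η => by simpa [mul_assoc] using key ξ η)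
  have hip₁' : ∀ ξ η : H, (inner ℂ (c₁ ξ) (s η) : ℂ) = inner ℂ (b ξ) η := fun ξ η => by
    simpa using hip₁ ξ η
  -- uniqueness helper
  have uniq : ∀ v w : H, v ∈ K.topologicalClosure → w ∈ K.topologicalClosure →
      (∀ η, (inner ℂ v (s η) : ℂ) = inner ℂ w (s η)) → v = w := by
    intro v w hv hw h
    have hd : v - w ∈ K.topologicalClosure := Submodule.sub_mem _ hv hw
    have hle : K.topologicalClosure ≤ LinearMap.ker ((innerSL ℂ (v - w) : H →L[ℂ] ℂ) : H →ₗ[ℂ] ℂ) := by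
      apply Submodule.topologicalClosure_minimal
      · rintro y ⟨η, rfl⟩
        rw [LinearMap.mem_ker]
        show (inner ℂ (v - w) ((s : H →ₗ[ℂ] H) η) : ℂ) = 0
        rw [inner_sub_left]
        have := h η
        simp only [ContinuousLinearMap.coe_coe]
        rw [this]; ring
      · exact ContinuousLinearMap.isClosed_ker _
    have h0 : (inner ℂ (v - w) (v - w) : ℂ) = 0 := hle hd
    have := inner_self_eq_zero.mp h0
    exact sub_eq_zero.mp this
  -- linearity of c₁
  have hadd₁ : ∀ ξ ξ' : H, c₁ (ξ + ξ') = c₁ ξ + c₁ ξ' := by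
    intro ξ ξ'
    apply uniq _ _ (hmem₁ _) (Submodule.add_mem _ (hmem₁ _) (hmem₁ _))
    intro η
    rw [inner_add_left, hip₁' _ η, hip₁' _ η, hip₁' _ η, map_add, inner_add_left]
  have hsmul₁ : ∀ (r : ℂ) (ξ : H), c₁ (r • ξ) = r • c₁ ξ := by
    intro r ξ
    apply uniq _ _ (hmem₁ _) (Submodule.smul_mem _ _ (hmem₁ _))
    intro η
    rw [inner_smul_left, hip₁' _ η, hip₁' _ η, map_smul, inner_smul_left]
  -- step 3 : construct c with ⟪c x, s η⟫ = ⟪x, c₁ η⟫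
  have hφbound : ∀ x η : H, ‖(inner ℂ x (c₁ η) : ℂ)‖ ≤ M * ‖x‖ * ‖s η‖ := by
    intro x η
    calc ‖(inner ℂ x (c₁ η) : ℂ)‖ ≤ ‖x‖ * ‖c₁ η‖ := norm_inner_le_norm _ _
    _ ≤ ‖x‖ * (M * ‖s η‖) := by
        have := hnorm₁ η
        have hx := norm_nonneg x
        nlinarith [norm_nonneg (c₁ η)]
    _ = M * ‖x‖ * ‖s η‖ := by ring
  choose c hmemc hnormc hipc using fun x : H =>
    stmt7_exist s
      { toFun := fun η => (inner ℂ x (c₁ η) : ℂ)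
        map_add' := fun η η' => by
          show (inner ℂ x (c₁ (η + η')) : ℂ) = inner ℂ x (c₁ η) + inner ℂ x (c₁ η')
          rw [hadd₁, inner_add_right]
        map_smul' := fun r η => by
          show (inner ℂ x (c₁ (r • η)) : ℂ) = r * inner ℂ x (c₁ η)
          rw [hsmul₁, inner_smul_right] }
      (M * ‖x‖) (by positivity) (fun η => by simpa [mul_assoc] using hφbound x η)
  have hipc' : ∀ x η : H, (inner ℂ (c x) (s η) : ℂ) = inner ℂ x (c₁ η) := fun x η => hipc x η
  -- linearity of c
  have haddc : ∀ x x' : H, c (x + x') = c x + c x' := by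
    intro x x'
    apply uniq _ _ (hmemc _) (Submodule.add_mem _ (hmemc _) (hmemc _))
    intro η
    rw [inner_add_left, hipc' _ η, hipc' _ η, hipc' _ η, inner_add_left]
  have hsmulc : ∀ (r : ℂ) (x : H), c (r • x) = r • c x := by
    intro r x
    apply uniq _ _ (hmemc _) (Submodule.smul_mem _ _ (hmemc _))
    intro η
    rw [inner_smul_left, hipc' _ η, hipc' _ η, inner_smul_left]
  let cL : H →L[ℂ] H :=
    LinearMap.mkContinuous
      { toFun := c, map_add' := haddc, map_smul' := hsmulc } M (fun x => hnormc x)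
  have hcLapp : ∀ x : H, cL x = c x := fun x => rfl
  have hnormcL : ‖cL‖ ≤ M := LinearMap.mkContinuous_norm_le _ hM _
  -- c ∘ s = c₁
  have hcs : ∀ ξ : H, c (s ξ) = c₁ ξ := by
    intro ξ
    apply uniq _ _ (hmemc _) (hmem₁ _)
    intro η
    rw [hipc' _ η]
    calc (inner ℂ (s ξ) (c₁ η) : ℂ)
        = (starRingEnd ℂ) (inner ℂ (c₁ η) (s ξ) : ℂ) := (inner_conj_symm _ _).symm
    _ = (starRingEnd ℂ) (inner ℂ (b η) ξ : ℂ) := by rw [hip₁' η ξ]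
    _ = (inner ℂ ξ (b η) : ℂ) := inner_conj_symm _ _
    _ = (inner ℂ (b ξ) η : ℂ) := (hbsym ξ η).symm
    _ = (inner ℂ (c₁ ξ) (s η) : ℂ) := (hip₁' ξ η).symm
  refine ⟨cL, ?_, hnormcL, ?_⟩
  · -- selfadjoint
    rw [ContinuousLinearMap.isSelfAdjoint_iff_isSymmetric]
    intro x y
    show (inner ℂ (c x) y : ℂ) = inner ℂ x (c y)
    have hsymm_on : ∀ z ∈ K.topologicalClosure, (inner ℂ (c x) z : ℂ) = inner ℂ x (c z) := by
      have hle : K.topologicalClosure ≤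
          LinearMap.ker ((innerSL ℂ (c x) - (innerSL ℂ x).comp cL : H →L[ℂ] ℂ) : H →ₗ[ℂ] ℂ) := by
        apply Submodule.topologicalClosure_minimal
        · rintro z ⟨η, rfl⟩
          rw [LinearMap.mem_ker]
          show (inner ℂ (c x) ((s : H →ₗ[ℂ] H) η) : ℂ) - inner ℂ x (cL ((s : H →ₗ[ℂ] H) η)) = 0
          have e1 : (inner ℂ (c x) (s η) : ℂ) = inner ℂ x (c₁ η) := hipc' x η
          have e2 : cL ((s : H →ₗ[ℂ] H) η) = c₁ η := by
            rw [hcLapp]; exact hcs η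
          rw [e2]
          show (inner ℂ (c x) (s η) : ℂ) - inner ℂ x (c₁ η) = 0
          rw [e1]; ring
        · exact ContinuousLinearMap.isClosed_ker _
      intro z hz
      have := hle hz
      rw [LinearMap.mem_ker] at this
      have : (inner ℂ (c x) z : ℂ) - inner ℂ x (cL z) = 0 := this
      rw [hcLapp] at this
      linear_combination this
    set y1 : H := (Submodule.orthogonalProjection K.topologicalClosure y : H) with hy1
    have hy1mem : y1 ∈ K.topologicalClosure := Submodule.coe_mem _
    have hy2mem : y - y1 ∈ K.topologicalClosureᗮ :=
      Submodule.sub_starProjection_mem_orthogonal y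
    have hcy2 : c (y - y1) = 0 := by
      apply uniq _ _ (hmemc _) (Submodule.zero_mem _)
      intro η
      rw [hipc' _ η, inner_zero_left]
      have h0 : (inner ℂ (c₁ η) (y - y1) : ℂ) = 0 :=
        (Submodule.mem_orthogonal _ _).mp hy2mem (c₁ η) (hmem₁ η)
      rw [← inner_conj_symm, h0, map_zero]
    have hcxy2 : (inner ℂ (c x) (y - y1) : ℂ) = 0 :=
      (Submodule.mem_orthogonal _ _).mp hy2mem (c x) (hmemc x)
    have hysplit : y = y1 + (y - y1) := by abel
    calc (inner ℂ (c x) y : ℂ) = inner ℂ (c x) (y1 + (y - y1)) := by rw [← hysplit]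
    _ = inner ℂ (c x) y1 + (inner ℂ (c x) (y - y1) : ℂ) := inner_add_right _ _ _
    _ = (inner ℂ x (c y1) : ℂ) := by rw [hcxy2, hsymm_on y1 hy1mem, add_zero]
    _ = inner ℂ x (c y1) + (inner ℂ x (c (y - y1)) : ℂ) := by rw [hcy2, inner_zero_right, add_zero]
    _ = (inner ℂ x (c (y1 + (y - y1))) : ℂ) := by rw [haddc, inner_add_right]
    _ = inner ℂ x (c y) := by rw [← hysplit]
  · -- factorization
    ext ξ
    apply ext_inner_right ℂ
    intro η
    show (inner ℂ (b ξ) η : ℂ) = inner ℂ ((s * cL * s) ξ) η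
    have e0 : (s * cL * s) ξ = s (c (s ξ)) := rfl
    rw [e0]
    calc (inner ℂ (b ξ) η : ℂ) = inner ℂ (c₁ ξ) (s η) := (hip₁' ξ η).symm
    _ = inner ℂ (c (s ξ)) (s η) := by rw [hcs]
    _ = inner ℂ (s (c (s ξ))) η := (hssym (c (s ξ)) η).symm
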